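/- For n+1 tasks with sorted arrivals a_1 ≤ ... ≤ a_{n+1}, assuming FCFS is optimal for any n tasks (induction hypothesis), among all orderings ending with task i, the ordering that processes the remaining tasks in FCFS order followed by task i has makespan at least that of the full FCFS ordering (1,2,...,n+1). -/

import Mathlib

/-- Completion time of processing tasks in the given order, starting from time `C`. -/
def comp (a e : ℕ → ℝ) : ℝ → List ℕ → ℝ
  | C, [] => C
  | C, i :: l => comp a e (max C (a i) + e i) l

/-- Makespan of a queue of tasks (indices). -/
def makespan (a e : ℕ → ℝ) (l : List ℕ) : ℝ := comp a e 0 l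

lemma comp_append (a e : ℕ → ℝ) (l₁ l₂ : List ℕ) : ∀ C,
    comp a e C (l₁ ++ l₂) = comp a e (comp a e C l₁) l₂ := by
  induction l₁ with
  | nil => intro C; rfl
  | cons j l ih => intro C; simp [comp, ih]

lemma comp_mono (a e : ℕ → ℝ) (l : List ℕ) : ∀ C C', C ≤ C' →
    comp a e C l ≤ comp a e C' l := by
  induction l with
  | nil => intro C C' h; exact h
  | cons j l ih =>
    intro C C' h
    exact ih _ _ (by gcongr)

lemma key (a e : ℕ → ℝ) (he : ∀ j, 0 ≤ e j) (i : ℕ) (S : List ℕ) :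
    ∀ C, (∀ j ∈ S, a i ≤ a j) →
      comp a e (max C (a i) + e i) S ≤ max (comp a e C S) (a i) + e i := by
  induction S with
  | nil => intro C _; exact le_refl _
  | cons j S ih =>
    intro C hS
    have hij : a i ≤ a j := hS j List.mem_cons_self
    have h1 : max (max C (a i) + e i) (a j) + e j ≤
        max (max C (a j) + e j) (a i) + e i := by
      have hmax : max (max C (a j) + e j) (a i) = max C (a j) + e j := by
        apply max_eq_left
        calc a i ≤ a j := hij
          _ ≤ max C (a j) := le_max_right _ _
          _ ≤ max C (a j) + e j := le_add_of_nonneg_right (he j)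
      rw [hmax]
      have : max (max C (a i) + e i) (a j) ≤ max C (a j) + e i := by
        apply max_le
        · exact add_le_add (max_le_max le_rfl hij) le_rfl
        · calc a j ≤ max C (a j) := le_max_right _ _
            _ ≤ max C (a j) + e i := le_add_of_nonneg_right (he i)
      linarith
    calc comp a e (max (max C (a i) + e i) (a j) + e j) S
        ≤ comp a e (max (max C (a j) + e j) (a i) + e i) S :=
          comp_mono a e S _ _ h1
      _ ≤ max (comp a e (max C (a j) + e j) S) (a i) + e i :=
          ih _ (fun k hk => hS k (List.mem_cons_of_mem _ hk))
      _ = max (comp a e C (j :: S)) (a i) + e i := rfl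

/-- for `n+1` tasks with sorted arrivals, under the induction hypothesis
that FCFS minimizes the makespan for any `n` tasks, any ordering processing the remaining
tasks in FCFS order followed by task `i` has makespan at least that of the full FCFS
ordering `(0,1,…,n)`. -/
theorem induction_step (n : ℕ) (a e : ℕ → ℝ)
    (ha0 : ∀ i, 0 ≤ a i) (he : ∀ i, 0 ≤ e i) (hsorted : Monotone a)
    (IH : ∀ l l' : List ℕ, l.length = n → l'.Perm l →
      l.Pairwise (fun i j => a i ≤ a j) → makespan a e l ≤ makespan a e l') :
    ∀ i ∈ List.range (n + 1),
      makespan a e (List.range (n + 1)) ≤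
        makespan a e (((List.range (n + 1)).erase i) ++ [i]) := by
  intro i hi
  have hin : i ≤ n := Nat.lt_succ_iff.mp (List.mem_range.mp hi)
  -- decompose range (n+1)
  have hsplit : List.range (n + 1) = List.range i ++ i :: List.range' (i + 1) (n - i) := by
    have h1 : i :: List.range' (i + 1) (n - i) = List.range' i (n - i + 1) := by
      rw [List.range'_succ]
    have h2 : List.range' 0 i 1 ++ List.range' (0 + 1 * i) (n - i + 1) 1 =
        List.range' 0 (i + (n - i + 1)) 1 := List.range'_append
    simp only [Nat.zero_add, Nat.one_mul] at h2
    rw [List.range_eq_range', h1, List.range_eq_range', h2]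
    congr 1
    omega

  have hnotP : i ∉ List.range i := by simp
  have herase : (List.range (n + 1)).erase i =
      List.range i ++ List.range' (i + 1) (n - i) := by
    rw [hsplit, List.erase_append_right _ hnotP, List.erase_cons_head]
  have hS : ∀ j ∈ List.range' (i + 1) (n - i), a i ≤ a j := by
    intro j hj
    have := (List.mem_range'_1.mp hj).1
    exact hsorted (by omega)
  rw [herase, hsplit]
  unfold makespan
  rw [comp_append, comp_append, comp_append]
  show comp a e (max _ (a i) + e i) _ ≤ comp a e (max _ (a i) + e i) []
  show _ ≤ max _ (a i) + e i
  exact key a e he i _ _ hS
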